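/- Let ℓ ≥ 3 be an integer and let G be the cycle graph on Fin N (N = 2ℓ+1). The face F = { f ∈ STAB(G) : Σ_{i ∈ Fin N} f(i) = ℓ } of the stable set polytope has dimension exactly 2ℓ, i.e., the direction of the affine span of F in ℝ^{Fin N} has dimension 2ℓ. -/

import Mathlib

def stabPolytope (N : ℕ) [NeZero N] : Set (Fin N → ℝ) :=
  convexHull ℝ
    { f | ∃ S : Finset (Fin N), (∀ i ∈ S, i + 1 ∉ S) ∧
          f = fun i => if i ∈ S then (1 : ℝ) else 0 }

private lemma sum_range_odd' (m : ℕ) :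
    ∑ d ∈ Finset.range (2*m+1), (if Odd d then (1:ℝ) else 0) = m := by
  induction m with
  | zero =>
    rw [Finset.sum_range_one, if_neg (by decide : ¬ Odd 0)]
    simp
  | succ n ih =>
    have h : 2*(n+1)+1 = (2*n+1) + 1 + 1 := by ring
    rw [h, Finset.sum_range_succ, Finset.sum_range_succ, ih]
    have h1 : Odd (2*n+1) := ⟨n, by ring⟩
    have h2 : ¬ Odd (2*n+1+1) := by simp [Nat.odd_iff]; omega
    simp only [h1, h2, if_true, if_false]
    push_cast; ring

private def chi (ℓ : ℕ) (k : Fin (2*ℓ+1)) : Fin (2*ℓ+1) → ℝ :=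
  fun j => if Odd ((j - k)).val then 1 else 0

private lemma chi_mem (ℓ : ℕ) (k : Fin (2*ℓ+1)) :
    chi ℓ k ∈ stabPolytope (2*ℓ+1) := by
  apply subset_convexHull
  refine ⟨Finset.univ.filter (fun i => Odd ((i - k)).val), ?_, ?_⟩
  · intro i hi
    simp only [Finset.mem_filter, Finset.mem_univ, true_and] at hi ⊢
    intro hcon
    have key : i + 1 - k = (i - k) + 1 := add_sub_right_comm i 1 k
    have hd : (i - k).val < 2*ℓ := by
      have := (i - k).isLt
      have := Nat.odd_iff.mp hi
      omega
    have hv : ((i - k) + 1).val = (i - k).val + 1 :=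
      Fin.val_add_one_of_lt (by rwa [Fin.lt_iff_val_lt_val, Fin.val_last])
    rw [key, hv] at hcon
    rw [Nat.odd_iff] at hi hcon
    omega
  · funext j
    simp [chi, Finset.mem_filter]

private lemma chi_sum (ℓ : ℕ) (k : Fin (2*ℓ+1)) :
    ∑ i, chi ℓ k i = (ℓ : ℝ) := by
  have h := Fintype.sum_equiv (Equiv.subRight k) (fun i => chi ℓ k i)
    (fun d => if Odd d.val then (1:ℝ) else 0) (fun i => rfl)
  rw [h, Fin.sum_univ_eq_sum_range (fun d => if Odd d then (1:ℝ) else 0), sum_range_odd']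

private lemma chi_diff (ℓ : ℕ) (hℓ : 3 ≤ ℓ) (k : Fin (2*ℓ+1)) :
    chi ℓ k - chi ℓ (k+2) = Pi.single (k+1) (1:ℝ) - Pi.single k 1 := by
  funext j
  have hN : 7 ≤ 2*ℓ+1 := by omega
  have h2 : ((2 : Fin (2*ℓ+1))).val = 2 := by
    have : ((2 : Fin (2*ℓ+1))).val = 2 % (2*ℓ+1) := rfl
    rw [this, Nat.mod_eq_of_lt (by omega)]
  have h1v : ((1 : Fin (2*ℓ+1))).val = 1 := by
    have : ((1 : Fin (2*ℓ+1))).val = 1 % (2*ℓ+1) := rfl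
    rw [this, Nat.mod_eq_of_lt (by omega)]
  have hsub : j - (k+2) = (j - k) - 2 := sub_add_eq_sub_sub j k 2
  have hdlt : (j - k).val < 2*ℓ+1 := (j - k).isLt
  have hjk : (j = k) ↔ (j - k).val = 0 := by
    constructor
    · rintro rfl; simp
    · intro h
      have : j - k = 0 := Fin.ext (by simpa using h)
      have := sub_eq_zero.mp this
      exact this
  have hjk1 : (j = k + 1) ↔ (j - k).val = 1 := by
    constructor
    · rintro rfl
      have : k + 1 - k = 1 := add_sub_cancel_left k 1
      rw [this, h1v]
    · intro h
      have : j - k = 1 := Fin.ext (by rw [h, h1v])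
      have := sub_eq_iff_eq_add.mp this
      rw [this]; exact add_comm 1 k
  have hval : ((j - k) - 2).val = (2*ℓ+1 - 2 + (j - k).val) % (2*ℓ+1) := by
    rw [Fin.sub_def]; simp [h2]; rw [Nat.mod_eq_of_lt (by omega : 2 < 2*ℓ+1)]; congr 1
  simp only [Pi.sub_apply, chi, hsub, Pi.single_apply, hval]
  generalize hd : (j - k).val = d at hjk hjk1 hdlt ⊢
  rcases Nat.lt_or_ge d 2 with hlt | hge
  · interval_cases d
    · have e1 : j = k := hjk.mpr rfl
      have e2 : ¬ (j = k + 1) := fun h => by simpa using hjk1.mp h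
      have hm : (2*ℓ+1-2+0) % (2*ℓ+1) = 2*ℓ-1 := by
        have h' : 2*ℓ+1-2+0 = 2*ℓ-1 := by omega
        rw [h', Nat.mod_eq_of_lt (by omega)]
      have ho : Odd (2*ℓ-1) := by rw [Nat.odd_iff]; omega
      have hno : ¬ Odd 0 := by simp
      rw [hm, if_neg hno, if_pos ho, if_pos e1, if_neg e2]
    · have e1 : ¬ (j = k) := fun h => by simpa using hjk.mp h
      have e2 : j = k + 1 := hjk1.mpr rfl
      have hm : (2*ℓ+1-2+1) % (2*ℓ+1) = 2*ℓ := by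
        have h' : 2*ℓ+1-2+1 = 2*ℓ := by omega
        rw [h', Nat.mod_eq_of_lt (by omega)]
      have hno : ¬ Odd (2*ℓ) := by rw [Nat.odd_iff]; omega
      rw [hm, if_pos odd_one, if_neg hno, if_neg e1, if_pos e2]
  · have e1 : ¬ (j = k) := by rw [hjk]; omega
    have e2 : ¬ (j = k + 1) := by rw [hjk1]; omega
    have hm : (2*ℓ+1-2+d) % (2*ℓ+1) = d - 2 := by
      have h' : 2*ℓ+1-2+d = (d-2) + (2*ℓ+1) := by omega
      rw [h', Nat.add_mod_right, Nat.mod_eq_of_lt (by omega)]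
    rw [hm, if_neg e1, if_neg e2]
    have hiff : Odd d ↔ Odd (d-2) := by rw [Nat.odd_iff, Nat.odd_iff]; omega
    rcases Classical.em (Odd d) with h | h
    · rw [if_pos h, if_pos (hiff.mp h)]; norm_num
    · rw [if_neg h, if_neg (fun hh => h (hiff.mpr hh))]

theorem stmt_5 (ℓ : ℕ) (hℓ : 3 ≤ ℓ) :
    Module.finrank ℝ
      (vectorSpan ℝ
        { f ∈ stabPolytope (2 * ℓ + 1) | ∑ i, f i = (ℓ : ℝ) }) = 2 * ℓ := by
  set F : Set (Fin (2*ℓ+1) → ℝ) :=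
    { f ∈ stabPolytope (2 * ℓ + 1) | ∑ i, f i = (ℓ : ℝ) } with hF
  let L : (Fin (2*ℓ+1) → ℝ) →ₗ[ℝ] ℝ := ∑ i : Fin (2*ℓ+1), LinearMap.proj i
  have hL : ∀ v : Fin (2*ℓ+1) → ℝ, L v = ∑ i, v i := by
    intro v; simp [L]
  have hface : ∀ k : Fin (2*ℓ+1), chi ℓ k ∈ F :=
    fun k => ⟨chi_mem ℓ k, chi_sum ℓ k⟩
  have hsingle : ∀ k : Fin (2*ℓ+1),
      (Pi.single (k+1) (1:ℝ) - Pi.single k 1) ∈ vectorSpan ℝ F := by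
    intro k
    rw [← chi_diff ℓ hℓ k]
    exact vsub_mem_vectorSpan ℝ (hface k) (hface (k+2))
  have htel : ∀ i : Fin (2*ℓ+1),
      (Pi.single i (1:ℝ) - Pi.single 0 1) ∈ vectorSpan ℝ F := by
    intro i
    induction i using Fin.induction with
    | zero => simp
    | succ n ih =>
      rw [← Fin.coeSucc_eq_succ]
      have := (vectorSpan ℝ F).add_mem (hsingle n.castSucc) ih
      simpa using this
  have hker : ∀ v : Fin (2*ℓ+1) → ℝ, (∑ i, v i) = 0 → v ∈ vectorSpan ℝ F := by
    intro v hv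
    have hrepr : v = ∑ i : Fin (2*ℓ+1), v i • (Pi.single i (1:ℝ) - Pi.single 0 1) := by
      funext j
      rw [Finset.sum_apply]
      simp only [Pi.smul_apply, Pi.sub_apply, Pi.single_apply, smul_eq_mul, mul_sub]
      rw [Finset.sum_sub_distrib]
      have h1 : ∑ i : Fin (2*ℓ+1), v i * (if j = i then (1:ℝ) else 0) = v j := by
        rw [Finset.sum_eq_single j]
        · simp
        · intro b _ hb; rw [if_neg (Ne.symm hb), mul_zero]
        · simp
      have h2 : ∑ i : Fin (2*ℓ+1), v i * (if j = 0 then (1:ℝ) else 0) = 0 := by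
        rw [← Finset.sum_mul, hv, zero_mul]
      rw [h1, h2, sub_zero]
    rw [hrepr]
    exact Submodule.sum_mem _ (fun i _ => Submodule.smul_mem _ _ (htel i))
  have hspan : vectorSpan ℝ F = LinearMap.ker L := by
    apply le_antisymm
    · rw [vectorSpan_def, Submodule.span_le]
      rintro v hv
      rw [Set.mem_vsub] at hv
      obtain ⟨a, ha, b, hb, rfl⟩ := hv
      rw [SetLike.mem_coe, LinearMap.mem_ker]
      have : a -ᵥ b = a - b := rfl
      rw [this, map_sub, hL, hL, ha.2, hb.2, sub_self]
    · intro v hv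
      rw [LinearMap.mem_ker, hL] at hv
      exact hker v hv
  rw [hspan]
  have hrange : LinearMap.range L = ⊤ := by
    rw [LinearMap.range_eq_top]
    intro y
    refine ⟨Pi.single 0 y, ?_⟩
    rw [hL, Finset.sum_pi_single']
    simp
  have hdim := LinearMap.finrank_range_add_finrank_ker L
  rw [hrange, finrank_top, Module.finrank_fintype_fun_eq_card,
    Module.finrank_self, Fintype.card_fin] at hdim
  omega
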